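/- Let G be a finite simple connected undirected graph in which every vertex has degree at least 1, let y be a vertex, let t, r, j be positive integers, and let p ∈ [0,1]. If for every vertex z the lazy simple random walk of length t started at z satisfies Pr(N_t^z(y) ≥ r) ≤ p, then for every vertex x the lazy simple random walk of length t started at x satisfies Pr(N_t^x(y) ≥ r·j) ≤ p^j. -/

import Mathlib

open Finset
set_option linter.unusedSectionVars false

section Defs

variable {V : Type} [Fintype V] [DecidableEq V]

/-- Transition kernel of the lazy simple random walk on `G`. -/
noncomputable def lazyStep (G : SimpleGraph V) [DecidableRel G.Adj] (u v : V) : ℝ :=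
  if u = v then 1 / 2 else if G.Adj u v then 1 / (2 * (G.degree u : ℝ)) else 0

/-- Law (probability mass function) of the lazy random walk of length `t` started at `x`,
as a function on trajectories `Fin (t+1) → V`. -/
noncomputable def lazyWalkLaw (G : SimpleGraph V) [DecidableRel G.Adj] (x : V) (t : ℕ)
    (f : Fin (t + 1) → V) : ℝ :=
  (if f 0 = x then 1 else 0) * ∏ i : Fin t, lazyStep G (f i.castSucc) (f i.succ)

/-- Probability of an event `E` of trajectories, under the lazy walk law. -/
noncomputable def lazyWalkPr (G : SimpleGraph V) [DecidableRel G.Adj] (x : V) (t : ℕ)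
    (E : Set (Fin (t + 1) → V)) : ℝ :=
  ∑ f : Fin (t + 1) → V, E.indicator (lazyWalkLaw G x t) f

/-- Expectation of a random variable `N` of the trajectory, under the lazy walk law. -/
noncomputable def lazyWalkExp (G : SimpleGraph V) [DecidableRel G.Adj] (x : V) (t : ℕ)
    (N : (Fin (t + 1) → V) → ℝ) : ℝ :=
  ∑ f : Fin (t + 1) → V, lazyWalkLaw G x t f * N f

/-- Number of indices `0 ≤ i ≤ t` at which the trajectory `f` visits `y`. -/
def visits (y : V) {t : ℕ} (f : Fin (t + 1) → V) : ℕ :=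
  (Finset.univ.filter fun i => f i = y).card

end Defs


section Aux

variable {V : Type} [Fintype V] [DecidableEq V] (G : SimpleGraph V) [DecidableRel G.Adj]

lemma lazyStep_nonneg (u v : V) : 0 ≤ lazyStep G u v := by
  unfold lazyStep
  split_ifs <;> positivity

lemma lazyWalkLaw_nonneg (x : V) (t : ℕ) (f : Fin (t+1) → V) : 0 ≤ lazyWalkLaw G x t f := by
  unfold lazyWalkLaw
  apply mul_nonneg
  · split_ifs <;> norm_num
  · exact Finset.prod_nonneg fun i _ => lazyStep_nonneg G _ _

lemma sum_lazyStep (hdeg : ∀ v : V, 1 ≤ G.degree v) (u : V) :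
    ∑ v : V, lazyStep G u v = 1 := by
  have hstep : ∀ v : V, lazyStep G u v =
      (if u = v then (1:ℝ)/2 else 0) +
      (if v ∈ G.neighborFinset u then 1 / (2 * (G.degree u : ℝ)) else 0) := by
    intro v
    unfold lazyStep
    by_cases h1 : u = v
    · subst h1
      simp [SimpleGraph.irrefl]
    · simp [h1, SimpleGraph.mem_neighborFinset]
  rw [Finset.sum_congr rfl fun v _ => hstep v, Finset.sum_add_distrib]
  rw [Finset.sum_ite_eq Finset.univ u (fun _ => (1:ℝ)/2)]
  rw [Finset.sum_ite_mem]
  simp only [Finset.univ_inter, Finset.sum_const, SimpleGraph.card_neighborFinset_eq_degree,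
    Finset.mem_univ, if_true, nsmul_eq_mul]
  have hd : (G.degree u : ℝ) ≠ 0 := by
    have := hdeg u
    positivity
  field_simp
  ring

lemma sum_pi_succ {n : ℕ} (F : (Fin (n+1) → V) → ℝ) :
    ∑ f : Fin (n+1) → V, F f = ∑ v : V, ∑ k : Fin n → V, F (Fin.cons v k) := by
  rw [← Equiv.sum_comp (Fin.consEquiv (fun _ : Fin (n+1) => V)) F]
  rw [Fintype.sum_prod_type]
  rfl

lemma law_cons (x v : V) (t : ℕ) (k : Fin (t+1) → V) :
    lazyWalkLaw G x (t+1) (Fin.cons v k) =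
      (if v = x then 1 else 0) * (lazyStep G v (k 0) * lazyWalkLaw G (k 0) t k) := by
  unfold lazyWalkLaw
  rw [Fin.prod_univ_succ]
  simp only [Fin.cons_zero, Fin.castSucc_zero, ← Fin.succ_castSucc, Fin.cons_succ,
    if_pos rfl, one_mul, if_true]

lemma sum_lazyWalkLaw (hdeg : ∀ v : V, 1 ≤ G.degree v) :
    ∀ (t : ℕ) (x : V), ∑ f : Fin (t+1) → V, lazyWalkLaw G x t f = 1 := by
  intro t
  induction t with
  | zero =>
    intro x
    rw [← Equiv.sum_comp (Equiv.funUnique (Fin 1) V).symm (lazyWalkLaw G x 0)]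
    unfold lazyWalkLaw
    simp
  | succ t ih =>
    intro x
    rw [sum_pi_succ]
    have step1 : ∀ v : V, ∑ k : Fin (t+1) → V, lazyWalkLaw G x (t+1) (Fin.cons v k)
        = (if v = x then (1:ℝ) else 0) *
          ∑ k : Fin (t+1) → V, lazyStep G v (k 0) * lazyWalkLaw G (k 0) t k := by
      intro v
      rw [Finset.mul_sum]
      exact Finset.sum_congr rfl fun k _ => law_cons G x v t k
    rw [Finset.sum_congr rfl fun v _ => step1 v]
    simp only [ite_mul, one_mul, zero_mul]
    rw [Finset.sum_ite_eq' Finset.univ x]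
    simp only [Finset.mem_univ, if_true, one_mul]
    have step2 : ∀ k : Fin (t+1) → V, lazyStep G x (k 0) * lazyWalkLaw G (k 0) t k
        = ∑ w : V, lazyStep G x w * lazyWalkLaw G w t k := by
      intro k
      rw [Finset.sum_eq_single (k 0)]
      · intro w _ hw
        unfold lazyWalkLaw
        rw [if_neg (fun hh => hw hh.symm)]
        ring
      · simp
    rw [Finset.sum_congr rfl fun k _ => step2 k, Finset.sum_comm]
    have step3 : ∀ w : V, ∑ k : Fin (t+1) → V, lazyStep G x w * lazyWalkLaw G w t k
        = lazyStep G x w := by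
      intro w
      rw [← Finset.mul_sum, ih w, mul_one]
    rw [Finset.sum_congr rfl fun w _ => step3 w]
    exact sum_lazyStep G hdeg x

end Aux

section Cnt

variable {V : Type} [Fintype V] [DecidableEq V]

/-- extension of a trajectory to all of ℕ -/
def ext' {t : ℕ} (f : Fin (t+1) → V) (i : ℕ) : V := f ⟨min i t, by omega⟩

lemma ext'_eq {t : ℕ} (f : Fin (t+1) → V) (i : ℕ) (hi : i ≤ t) :
    ext' f i = f ⟨i, by omega⟩ := by
  unfold ext'
  congr 1
  exact Fin.ext (by simp [Nat.min_eq_left hi])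

/-- count of visits to `y` among indices `0..n` -/
def cnt (y : V) {t : ℕ} (f : Fin (t+1) → V) (n : ℕ) : ℕ :=
  ∑ i ∈ Finset.range (n+1), if ext' f i = y then 1 else 0

lemma ext'_val {t : ℕ} (f : Fin (t+1) → V) (i : Fin (t+1)) : ext' f i.1 = f i := by
  rw [ext'_eq f i.1 (by omega)]

lemma visits_eq_cnt (y : V) {t : ℕ} (f : Fin (t+1) → V) : visits y f = cnt y f t := by
  unfold visits cnt
  rw [Finset.card_filter]
  rw [← Fin.sum_univ_eq_sum_range (fun i => if ext' f i = y then 1 else 0) (t+1)]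
  apply Finset.sum_congr rfl
  intro i _
  rw [ext'_val f i]

lemma cnt_mono (y : V) {t : ℕ} (f : Fin (t+1) → V) {n n' : ℕ} (h : n ≤ n') :
    cnt y f n ≤ cnt y f n' := by
  exact Finset.sum_le_sum_of_subset (Finset.range_subset_range.2 (by omega))

lemma cnt_succ (y : V) {t : ℕ} (f : Fin (t+1) → V) (n : ℕ) :
    cnt y f (n+1) = cnt y f n + (if ext' f (n+1) = y then 1 else 0) :=
  Finset.sum_range_succ _ _

lemma cnt_zero_le (y : V) {t : ℕ} (f : Fin (t+1) → V) : cnt y f 0 ≤ 1 := by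
  have : cnt y f 0 = if ext' f 0 = y then 1 else 0 := by
    unfold cnt
    rw [Finset.sum_range_one]
  rw [this]
  split <;> omega

/-- `s` is the time of the `r`-th visit to `y` -/
def tEvent (y : V) (r s : ℕ) {t : ℕ} (f : Fin (t+1) → V) : Prop :=
  cnt y f s = r ∧ ∀ n < s, cnt y f n < r

instance (y : V) (r s : ℕ) {t : ℕ} (f : Fin (t+1) → V) : Decidable (tEvent y r s f) := by
  unfold tEvent
  exact instDecidableAnd

lemma exists_tEvent (y : V) {r : ℕ} (hr : 0 < r) {t : ℕ} {f : Fin (t+1) → V}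
    (hv : r ≤ visits y f) : ∃ s ≤ t, tEvent y r s f := by
  have hc : r ≤ cnt y f t := by rw [← visits_eq_cnt]; exact hv
  have hex : ∃ n, r ≤ cnt y f n := ⟨t, hc⟩
  obtain ⟨s, hspec, hmin'⟩ : ∃ s, (r ≤ cnt y f s) ∧ ∀ n < s, ¬ r ≤ cnt y f n :=
    ⟨Nat.find hex, Nat.find_spec hex, fun n hn => Nat.find_min hex hn⟩
  have hmin : ∀ n < s, cnt y f n < r := fun n hn => by have := hmin' n hn; omega
  have hst : s ≤ t := by
    by_contra hgt
    exact hmin' t (by omega) hc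
  refine ⟨s, hst, ?_, hmin⟩
  rcases Nat.eq_zero_or_pos s with h0 | hpos
  · subst h0
    have := cnt_zero_le y f
    omega
  · obtain ⟨n, rfl⟩ : ∃ n, s = n + 1 := ⟨s - 1, by omega⟩
    have h1 := hmin n (by omega)
    have h2 := cnt_succ y f n
    split at h2 <;> omega

lemma tEvent_unique (y : V) (r : ℕ) {t : ℕ} {f : Fin (t+1) → V} {s s' : ℕ}
    (h1 : tEvent y r s f) (h2 : tEvent y r s' f) : s = s' := by
  obtain ⟨ha1, hb1⟩ := h1
  obtain ⟨ha2, hb2⟩ := h2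
  by_contra hne
  rcases Nat.lt_or_ge s s' with hlt | hge
  · have := hb2 s hlt
    omega
  · have hlt : s' < s := by omega
    have := hb1 s' hlt
    omega

lemma tEvent_visits (y : V) (r : ℕ) {t : ℕ} {f : Fin (t+1) → V} {s : ℕ} (hst : s ≤ t)
    (h1 : tEvent y r s f) : r ≤ visits y f := by
  obtain ⟨ha1, hb1⟩ := h1
  rw [visits_eq_cnt]
  have := cnt_mono y f hst
  omega

end Cnt

section Split

variable {V : Type} [Fintype V] [DecidableEq V]

def pre (s m : ℕ) (f : Fin (s+m+1) → V) : Fin (s+1) → V := fun i => f ⟨i.1, by omega⟩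

def suf (s m : ℕ) (f : Fin (s+m+1) → V) : Fin (m+1) → V := fun i => f ⟨s+i.1, by omega⟩

lemma ext'_pre (s m : ℕ) (f : Fin (s+m+1) → V) (i : ℕ) (hi : i ≤ s) :
    ext' (pre s m f) i = ext' f i := by
  rw [ext'_eq _ i hi, ext'_eq f i (by omega)]
  rfl

lemma cnt_pre (y : V) (s m : ℕ) (f : Fin (s+m+1) → V) (n : ℕ) (hn : n ≤ s) :
    cnt y (pre s m f) n = cnt y f n := by
  unfold cnt
  apply Finset.sum_congr rfl
  intro i hi
  rw [ext'_pre s m f i (by simp at hi; omega)]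

lemma tEvent_pre (y : V) (r s m : ℕ) (f : Fin (s+m+1) → V) :
    tEvent y r s f ↔ tEvent y r s (pre s m f) := by
  unfold tEvent
  constructor
  · rintro ⟨ha, hb⟩
    exact ⟨by rw [cnt_pre y s m f s le_rfl]; exact ha,
      fun n hn => by rw [cnt_pre y s m f n (by omega)]; exact hb n hn⟩
  · rintro ⟨ha, hb⟩
    exact ⟨by rw [← cnt_pre y s m f s le_rfl]; exact ha,
      fun n hn => by rw [← cnt_pre y s m f n (by omega)]; exact hb n hn⟩

lemma visits_pre_le (y : V) (s m : ℕ) (f : Fin (s+m+1) → V) :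
    visits y (pre s m f) ≤ visits y f := by
  rw [visits_eq_cnt, visits_eq_cnt]
  calc cnt y (pre s m f) s = cnt y f s := cnt_pre y s m f s le_rfl
  _ ≤ cnt y f (s+m) := cnt_mono y f (by omega)

lemma visits_suf (y : V) (s m : ℕ) (f : Fin (s+m+1) → V) :
    visits y (suf s m f) = ∑ i ∈ Finset.range (m+1), if ext' f (s+i) = y then 1 else 0 := by
  rw [visits_eq_cnt]
  unfold cnt
  apply Finset.sum_congr rfl
  intro i hi
  have hi' : i ≤ m := by simp at hi; omega
  rw [ext'_eq _ i hi', ext'_eq f (s+i) (by omega)]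
  rfl

lemma visits_split (y : V) (s m : ℕ) (f : Fin (s+m+1) → V) :
    cnt y f s + visits y (suf s m f) = visits y f + (if ext' f s = y then 1 else 0) := by
  rw [visits_suf, visits_eq_cnt]
  unfold cnt
  have h1 : ∑ i ∈ Finset.range (s+m+1), (if ext' f i = y then 1 else 0)
      = ∑ i ∈ Finset.range (s+1), (if ext' f i = y then 1 else 0)
        + ∑ i ∈ Finset.range m, (if ext' f (s+1+i) = y then 1 else 0) := by
    have : s+m+1 = (s+1)+m := by omega
    rw [this, Finset.sum_range_add]
  have h2 : ∑ i ∈ Finset.range (m+1), (if ext' f (s+i) = y then 1 else 0)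
      = (∑ i ∈ Finset.range m, (if ext' f (s+(i+1)) = y then 1 else 0))
        + (if ext' f (s+0) = y then 1 else 0) := Finset.sum_range_succ' _ _
  have h4 : ∑ i ∈ Finset.range m, (if ext' f (s+(i+1)) = y then 1 else 0)
      = ∑ i ∈ Finset.range m, (if ext' f (s+1+i) = y then 1 else 0) :=
    Finset.sum_congr rfl (fun i _ => by rw [show s+(i+1) = s+1+i from by omega])
  simp only [Nat.add_zero] at h2
  omega

end Split

section SplitSum

variable {V : Type} [Fintype V] [DecidableEq V] (G : SimpleGraph V) [DecidableRel G.Adj]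

lemma law_split (x : V) (s m : ℕ) (f : Fin (s+m+1) → V) :
    lazyWalkLaw G x (s+m) f =
      lazyWalkLaw G x s (pre s m f) *
        lazyWalkLaw G (f ⟨s, by omega⟩) m (suf s m f) := by
  unfold lazyWalkLaw
  have hmain : ∏ i : Fin (s+m), lazyStep G (f i.castSucc) (f i.succ)
      = ∏ i ∈ Finset.range (s+m), lazyStep G (ext' f i) (ext' f (i+1)) := by
    rw [← Fin.prod_univ_eq_prod_range (fun i => lazyStep G (ext' f i) (ext' f (i+1))) (s+m)]
    apply Finset.prod_congr rfl
    intro i _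
    congr 1
    · rw [ext'_eq f i.1 (by omega)]
      exact congrArg f (Fin.ext rfl)
    · rw [ext'_eq f (i.1+1) (by omega)]
      exact congrArg f (Fin.ext rfl)
  have hpre : ∏ i : Fin s, lazyStep G (pre s m f i.castSucc) (pre s m f i.succ)
      = ∏ i ∈ Finset.range s, lazyStep G (ext' f i) (ext' f (i+1)) := by
    rw [← Fin.prod_univ_eq_prod_range (fun i => lazyStep G (ext' f i) (ext' f (i+1))) s]
    apply Finset.prod_congr rfl
    intro i _
    congr 1
    · rw [ext'_eq f i.1 (by omega)]
      exact congrArg f (Fin.ext rfl)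
    · rw [ext'_eq f (i.1+1) (by omega)]
      exact congrArg f (Fin.ext rfl)
  have hsuf : ∏ i : Fin m, lazyStep G (suf s m f i.castSucc) (suf s m f i.succ)
      = ∏ i ∈ Finset.range m, lazyStep G (ext' f (s+i)) (ext' f (s+i+1)) := by
    rw [← Fin.prod_univ_eq_prod_range (fun i => lazyStep G (ext' f (s+i)) (ext' f (s+i+1))) m]
    apply Finset.prod_congr rfl
    intro i _
    congr 1
    · rw [ext'_eq f (s+i.1) (by omega)]
      exact congrArg f (Fin.ext rfl)
    · rw [ext'_eq f (s+i.1+1) (by omega)]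
      exact congrArg f (Fin.ext rfl)
  have hpre0 : pre s m f 0 = f 0 := congrArg f (Fin.ext rfl)
  have hsuf0 : suf s m f 0 = f ⟨s, by omega⟩ := congrArg f (Fin.ext rfl)
  rw [hmain, hpre, hsuf, hpre0, hsuf0, if_pos rfl, Finset.prod_range_add
    (fun i => lazyStep G (ext' f i) (ext' f (i+1))) s m]
  ring

def joinT (s m : ℕ) (g : Fin (s+1) → V) (k : Fin m → V) : Fin (s+m+1) → V :=
  fun i => if h : i.1 ≤ s then g ⟨i.1, by omega⟩ else k ⟨i.1 - (s+1), by omega⟩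

lemma pre_join (s m : ℕ) (g : Fin (s+1) → V) (k : Fin m → V) :
    pre s m (joinT s m g k) = g := by
  funext i
  show joinT s m g k ⟨i.1, by omega⟩ = g i
  unfold joinT
  rw [dif_pos (by simp only; omega)]

lemma join_s (s m : ℕ) (g : Fin (s+1) → V) (k : Fin m → V) :
    joinT s m g k ⟨s, by omega⟩ = g (Fin.last s) := by
  unfold joinT
  rw [dif_pos (by simp only; omega)]
  exact congrArg g (Fin.ext rfl)

lemma suf_join (s m : ℕ) (g : Fin (s+1) → V) (k : Fin m → V) :
    suf s m (joinT s m g k) = Fin.cons (g (Fin.last s)) k := by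
  funext i
  induction i using Fin.cases with
  | zero =>
    rw [Fin.cons_zero]
    show joinT s m g k ⟨s + 0, by omega⟩ = g (Fin.last s)
    unfold joinT
    rw [dif_pos (by simp only; omega)]
    exact congrArg g (Fin.ext rfl)
  | succ j =>
    rw [Fin.cons_succ]
    show joinT s m g k ⟨s + (j.1+1), by omega⟩ = k j
    unfold joinT
    rw [dif_neg (by simp only; omega)]
    exact congrArg k (Fin.ext (by simp only; omega))

def splitEquiv (s m : ℕ) : ((Fin (s+1) → V) × (Fin m → V)) ≃ (Fin (s+m+1) → V) where
  toFun p := joinT s m p.1 p.2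
  invFun f := (pre s m f, fun i => f ⟨s+1+i.1, by omega⟩)
  left_inv p := by
    obtain ⟨g, k⟩ := p
    refine Prod.ext ?_ ?_
    · exact pre_join s m g k
    · funext i
      show joinT s m g k ⟨s+1+i.1, by omega⟩ = k i
      unfold joinT
      rw [dif_neg (by simp only; omega)]
      exact congrArg k (Fin.ext (by simp only; omega))
  right_inv f := by
    funext i
    show joinT s m (pre s m f) _ i = f i
    unfold joinT
    by_cases h : i.1 ≤ s
    · rw [dif_pos h]
      exact congrArg f (Fin.ext rfl)
    · rw [dif_neg h]
      exact congrArg f (Fin.ext (by simp only; omega))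

lemma sum_cons_law (z : V) (m : ℕ) (Ψ : (Fin (m+1) → V) → ℝ) :
    ∑ h : Fin (m+1) → V, lazyWalkLaw G z m h * Ψ h
      = ∑ k : Fin m → V, lazyWalkLaw G z m (Fin.cons z k) * Ψ (Fin.cons z k) := by
  rw [sum_pi_succ (fun h => lazyWalkLaw G z m h * Ψ h)]
  rw [Finset.sum_eq_single z]
  · intro v _ hv
    apply Finset.sum_eq_zero
    intro k _
    have hz : lazyWalkLaw G z m (Fin.cons v k) = 0 := by
      unfold lazyWalkLaw
      rw [show (Fin.cons v k : Fin (m+1) → V) 0 = v from Fin.cons_zero _ _, if_neg hv, zero_mul]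
    rw [hz, zero_mul]
  · simp

lemma split_sum (x : V) (s m : ℕ) (Φ : (Fin (s+1) → V) → (Fin (m+1) → V) → ℝ) :
    ∑ f : Fin (s+m+1) → V, lazyWalkLaw G x (s+m) f * Φ (pre s m f) (suf s m f)
    = ∑ g : Fin (s+1) → V, lazyWalkLaw G x s g *
        ∑ h : Fin (m+1) → V, lazyWalkLaw G (g (Fin.last s)) m h * Φ g h := by
  rw [← Equiv.sum_comp (splitEquiv s m)
    (fun f => lazyWalkLaw G x (s+m) f * Φ (pre s m f) (suf s m f))]
  rw [Fintype.sum_prod_type]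
  apply Finset.sum_congr rfl
  intro g _
  have hterm : ∀ k : Fin m → V,
      lazyWalkLaw G x (s+m) (joinT s m g k) *
        Φ (pre s m (joinT s m g k)) (suf s m (joinT s m g k))
      = lazyWalkLaw G x s g *
          (lazyWalkLaw G (g (Fin.last s)) m (Fin.cons (g (Fin.last s)) k) *
            Φ g (Fin.cons (g (Fin.last s)) k)) := by
    intro k
    rw [law_split G x s m (joinT s m g k), pre_join, suf_join, join_s]
    ring
  calc ∑ k : Fin m → V, (fun f => lazyWalkLaw G x (s+m) f * Φ (pre s m f) (suf s m f))
        ((splitEquiv s m) (g, k))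
      = ∑ k : Fin m → V, lazyWalkLaw G x s g *
          (lazyWalkLaw G (g (Fin.last s)) m (Fin.cons (g (Fin.last s)) k) *
            Φ g (Fin.cons (g (Fin.last s)) k)) := Finset.sum_congr rfl fun k _ => hterm k
    _ = lazyWalkLaw G x s g * ∑ h : Fin (m+1) → V,
          lazyWalkLaw G (g (Fin.last s)) m h * Φ g h := by
        rw [← Finset.mul_sum]
        congr 1
        exact (sum_cons_law G (g (Fin.last s)) m (fun h => Φ g h)).symm

end SplitSum

section Pr

variable {V : Type} [Fintype V] [DecidableEq V] (G : SimpleGraph V) [DecidableRel G.Adj]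

lemma pr_eq (x : V) (t : ℕ) (P : (Fin (t+1) → V) → Prop) [DecidablePred P] :
    lazyWalkPr G x t {f | P f}
      = ∑ f : Fin (t+1) → V, if P f then lazyWalkLaw G x t f else 0 := by
  unfold lazyWalkPr
  apply Finset.sum_congr rfl
  intro f _
  rw [Set.indicator_apply]
  exact if_congr Iff.rfl rfl rfl

lemma pr_mono_t (hdeg : ∀ v : V, 1 ≤ G.degree v) (y z : V) (a b k : ℕ) :
    lazyWalkPr G z a {f | k ≤ visits y f} ≤ lazyWalkPr G z (a+b) {f | k ≤ visits y f} := by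
  rw [pr_eq, pr_eq]
  have hinner : ∀ g : Fin (a+1) → V,
      ∑ h : Fin (b+1) → V, lazyWalkLaw G (g (Fin.last a)) b h *
        (if k ≤ visits y g then (1:ℝ) else 0)
      = (if k ≤ visits y g then (1:ℝ) else 0) := by
    intro g
    rw [← Finset.sum_mul, sum_lazyWalkLaw G hdeg b (g (Fin.last a)), one_mul]
  have e1 : ∑ f : Fin (a+1) → V, (if k ≤ visits y f then lazyWalkLaw G z a f else 0)
      = ∑ f : Fin (a+b+1) → V, lazyWalkLaw G z (a+b) f *
          (if k ≤ visits y (pre a b f) then 1 else 0) := by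
    rw [split_sum G z a b (fun g _ => if k ≤ visits y g then (1:ℝ) else 0)]
    apply Finset.sum_congr rfl
    intro g _
    rw [hinner g]
    split_ifs <;> ring
  rw [e1]
  apply Finset.sum_le_sum
  intro f _
  by_cases hpf : k ≤ visits y (pre a b f)
  · rw [if_pos hpf, mul_one, if_pos (le_trans hpf (visits_pre_le y a b f))]
  · rw [if_neg hpf, mul_zero]
    split_ifs with hh
    · exact lazyWalkLaw_nonneg G z (a+b) f
    · exact le_rfl

lemma key_step (hdeg : ∀ v : V, 1 ≤ G.degree v) (y x : V) (r s m k : ℕ) (q : ℝ) (hq0 : 0 ≤ q)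
    (hbound : ∀ z : V, lazyWalkPr G z (s+m) {h | k ≤ visits y h} ≤ q) :
    ∑ f : Fin (s+m+1) → V,
        (if tEvent y r s f ∧ r + k ≤ visits y f then lazyWalkLaw G x (s+m) f else 0)
      ≤ q * ∑ f : Fin (s+m+1) → V,
          (if tEvent y r s f then lazyWalkLaw G x (s+m) f else 0) := by
  have hA : ∀ f : Fin (s+m+1) → V,
      (if tEvent y r s f ∧ r + k ≤ visits y f then lazyWalkLaw G x (s+m) f else 0)
      ≤ lazyWalkLaw G x (s+m) f * ((if tEvent y r s (pre s m f) then (1:ℝ) else 0) *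
          (if k ≤ visits y (suf s m f) then 1 else 0)) := by
    intro f
    by_cases hP : tEvent y r s f ∧ r + k ≤ visits y f
    · obtain ⟨hT, hV⟩ := hP
      rw [if_pos ⟨hT, hV⟩]
      have h1 : tEvent y r s (pre s m f) := (tEvent_pre y r s m f).1 hT
      have h2 : k ≤ visits y (suf s m f) := by
        have hvs := visits_split y s m f
        have hc : cnt y f s = r := hT.1
        generalize (if ext' f s = y then 1 else 0 : ℕ) = bb at hvs
        omega
      rw [if_pos h1, if_pos h2, mul_one, mul_one]
    · rw [if_neg hP]
      apply mul_nonneg (lazyWalkLaw_nonneg G x (s+m) f)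
      apply mul_nonneg <;> split_ifs <;> norm_num
  refine le_trans (Finset.sum_le_sum fun f _ => hA f) ?_
  rw [split_sum G x s m (fun g h =>
    (if tEvent y r s g then (1:ℝ) else 0) * (if k ≤ visits y h then 1 else 0))]
  have hB : ∀ g : Fin (s+1) → V,
      lazyWalkLaw G x s g * ∑ h : Fin (m+1) → V, lazyWalkLaw G (g (Fin.last s)) m h *
          ((if tEvent y r s g then (1:ℝ) else 0) * (if k ≤ visits y h then 1 else 0))
      ≤ lazyWalkLaw G x s g * ((if tEvent y r s g then (1:ℝ) else 0) * q) := by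
    intro g
    apply mul_le_mul_of_nonneg_left _ (lazyWalkLaw_nonneg G x s g)
    by_cases hT : tEvent y r s g
    · rw [if_pos hT]
      simp only [one_mul]
      have e2 : ∑ h : Fin (m+1) → V, lazyWalkLaw G (g (Fin.last s)) m h *
            (if k ≤ visits y h then (1:ℝ) else 0)
          = lazyWalkPr G (g (Fin.last s)) m {h | k ≤ visits y h} := by
        rw [pr_eq]
        apply Finset.sum_congr rfl
        intro h _
        split_ifs <;> ring
      rw [e2]
      have h3 := pr_mono_t G hdeg y (g (Fin.last s)) m s k
      rw [Nat.add_comm m s] at h3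
      exact le_trans h3 (hbound (g (Fin.last s)))
    · rw [if_neg hT]
      simp
  refine le_trans (Finset.sum_le_sum fun g _ => hB g) ?_
  have hC : ∑ g : Fin (s+1) → V, lazyWalkLaw G x s g *
        ((if tEvent y r s g then (1:ℝ) else 0) * q)
      = q * ∑ g : Fin (s+1) → V, lazyWalkLaw G x s g *
          (if tEvent y r s g then (1:ℝ) else 0) := by
    rw [Finset.mul_sum]
    apply Finset.sum_congr rfl
    intro g _
    ring
  rw [hC]
  have hD : ∑ f : Fin (s+m+1) → V, (if tEvent y r s f then lazyWalkLaw G x (s+m) f else 0)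
      = ∑ g : Fin (s+1) → V, lazyWalkLaw G x s g *
          (if tEvent y r s g then (1:ℝ) else 0) := by
    have e3 : ∑ f : Fin (s+m+1) → V,
          (if tEvent y r s f then lazyWalkLaw G x (s+m) f else 0)
        = ∑ f : Fin (s+m+1) → V, lazyWalkLaw G x (s+m) f *
            (if tEvent y r s (pre s m f) then (1:ℝ) else 0) := by
      apply Finset.sum_congr rfl
      intro f _
      by_cases hT : tEvent y r s f
      · rw [if_pos hT, if_pos ((tEvent_pre y r s m f).1 hT), mul_one]
      · rw [if_neg hT, if_neg (fun hc => hT ((tEvent_pre y r s m f).2 hc)), mul_zero]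
    rw [e3, split_sum G x s m (fun g _ => if tEvent y r s g then (1:ℝ) else 0)]
    apply Finset.sum_congr rfl
    intro g _
    congr 1
    rw [← Finset.sum_mul, sum_lazyWalkLaw G hdeg m (g (Fin.last s)), one_mul]
  rw [hD]

end Pr

/-- if for every starting vertex `z` we have `Pr(N_t^z(y) ≥ r) ≤ p`, then
for every starting vertex `x` we have `Pr(N_t^x(y) ≥ r·j) ≤ p^j`. -/
theorem statement_5 (V : Type) [Fintype V] [DecidableEq V]
    (G : SimpleGraph V) [DecidableRel G.Adj]
    (hconn : G.Connected) (hdeg : ∀ v : V, 1 ≤ G.degree v)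
    (y : V) (t r j : ℕ) (ht : 0 < t) (hr : 0 < r) (hj : 0 < j)
    (p : ℝ) (hp0 : 0 ≤ p) (hp1 : p ≤ 1)
    (h : ∀ z : V, lazyWalkPr G z t {f | r ≤ visits y f} ≤ p) :
    ∀ x : V, lazyWalkPr G x t {f | r * j ≤ visits y f} ≤ p ^ j := by
  have main : ∀ (j : ℕ), 0 < j →
      ∀ x : V, lazyWalkPr G x t {f | r * j ≤ visits y f} ≤ p ^ j := by
    intro j
    induction j with
    | zero => exact fun h0 => absurd h0 (by omega)
    | succ j ih =>
      intro _ x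
      rcases Nat.eq_zero_or_pos j with rfl | hjpos
      · simpa using h x
      · have ih' := ih hjpos
        have hrw : {f : Fin (t+1) → V | r * (j+1) ≤ visits y f}
            = {f | r + r*j ≤ visits y f} := by
          have : r * (j+1) = r + r*j := by ring
          rw [this]
        rw [hrw, pr_eq]
        calc ∑ f : Fin (t+1) → V, (if r + r*j ≤ visits y f then lazyWalkLaw G x t f else 0)
            ≤ ∑ f : Fin (t+1) → V, ∑ s ∈ Finset.range (t+1),
                (if tEvent y r s f ∧ r + r*j ≤ visits y f then lazyWalkLaw G x t f else 0) := by
              apply Finset.sum_le_sum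
              intro f _
              by_cases hP : r + r*j ≤ visits y f
              · have hrle : r ≤ visits y f := by omega
                obtain ⟨s₀, hs₀t, hT₀⟩ := exists_tEvent y hr hrle
                have hmem : s₀ ∈ Finset.range (t+1) := Finset.mem_range.2 (by omega)
                rw [if_pos hP]
                refine le_trans (le_of_eq (if_pos ⟨hT₀, hP⟩).symm)
                  (Finset.single_le_sum (f := fun s =>
                    if tEvent y r s f ∧ r + r*j ≤ visits y f then lazyWalkLaw G x t f else 0)
                    (fun s _ => ?_) hmem)
                try dsimp only
                split_ifs with hh
                · exact lazyWalkLaw_nonneg G x t f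
                · exact le_rfl
              · rw [if_neg hP]
                apply Finset.sum_nonneg
                intro s _
                split_ifs with hh
                · exact lazyWalkLaw_nonneg G x t f
                · exact le_rfl
          _ = ∑ s ∈ Finset.range (t+1), ∑ f : Fin (t+1) → V,
                (if tEvent y r s f ∧ r + r*j ≤ visits y f then lazyWalkLaw G x t f else 0) :=
              Finset.sum_comm
          _ ≤ ∑ s ∈ Finset.range (t+1), p^j * ∑ f : Fin (t+1) → V,
                (if tEvent y r s f then lazyWalkLaw G x t f else 0) := by
              apply Finset.sum_le_sum
              intro s hs
              have hst : s ≤ t := by have := Finset.mem_range.1 hs; omega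
              obtain ⟨m, rfl⟩ := Nat.exists_eq_add_of_le hst
              exact key_step G hdeg y x r s m (r*j) (p^j) (pow_nonneg hp0 j)
                (fun z => ih' z)
          _ = p^j * ∑ s ∈ Finset.range (t+1), ∑ f : Fin (t+1) → V,
                (if tEvent y r s f then lazyWalkLaw G x t f else 0) :=
              (Finset.mul_sum _ _ _).symm
          _ ≤ p^j * p := by
              apply mul_le_mul_of_nonneg_left _ (pow_nonneg hp0 j)
              rw [Finset.sum_comm]
              calc ∑ f : Fin (t+1) → V, ∑ s ∈ Finset.range (t+1),
                    (if tEvent y r s f then lazyWalkLaw G x t f else 0)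
                  ≤ ∑ f : Fin (t+1) → V,
                      (if r ≤ visits y f then lazyWalkLaw G x t f else 0) := by
                    apply Finset.sum_le_sum
                    intro f _
                    by_cases hT : ∃ s ∈ Finset.range (t+1), tEvent y r s f
                    · obtain ⟨s₀, hs₀, hT₀⟩ := hT
                      rw [Finset.sum_eq_single_of_mem s₀ hs₀
                        (fun s' _ hne => if_neg (fun hT' => hne (tEvent_unique y r hT' hT₀)))]
                      rw [if_pos hT₀, if_pos (tEvent_visits y r
                        (by have := Finset.mem_range.1 hs₀; omega) hT₀)]
                    · push_neg at hT
                      rw [Finset.sum_eq_zero (fun s hs => if_neg (hT s hs))]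
                      split_ifs with hh
                      · exact lazyWalkLaw_nonneg G x t f
                      · exact le_rfl
                _ = lazyWalkPr G x t {f | r ≤ visits y f} := (pr_eq G x t _).symm
                _ ≤ p := h x
          _ = p ^ (j+1) := by rw [pow_succ]
  exact main j hj
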